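/- Let G_N : ℤ → ℝ be defined by G_N = a·1_{−ℕ} + N·1_{{0}} + b·1_{ℕ} for a, b ≥ 0 and N ∈ ℕ with N ≥ max{a,b}. Then for the uncentered discrete maximal operator, Var(M̃G_N) = Var(G_N) − |b − a|. -/

import Mathlib

/-- Total variation over ℤ. -/
noncomputable def varZ (G : ℤ → ℝ) : ENNReal :=
  ∑' n : ℤ, ENNReal.ofReal |G (n + 1) - G n|

/-- The uncentered discrete maximal operator. -/
noncomputable def uHL (G : ℤ → ℝ) (n : ℤ) : ℝ :=
  ⨆ p : ℕ × ℕ, (1 / ((p.1 : ℝ) + (p.2 : ℝ) + 1)) *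
    ∑ y ∈ Finset.Icc (n - (p.1 : ℤ)) (n + (p.2 : ℤ)), |G y|

open Filter Finset

/-- Telescoping sum for an antitone sequence. -/
lemma tele_tsum {u : ℕ → ℝ} {L : ℝ} (hmono : Antitone u)
    (hlim : Tendsto u atTop (nhds L)) :
    ∑' k : ℕ, ENNReal.ofReal (u k - u (k + 1)) = ENNReal.ofReal (u 0 - L) := by
  have hnn : ∀ k, 0 ≤ u k - u (k + 1) := fun k => sub_nonneg.2 (hmono (Nat.le_succ k))
  have hhs : HasSum (fun k => u k - u (k + 1)) (u 0 - L) := by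
    rw [hasSum_iff_tendsto_nat_of_nonneg hnn]
    have h1 : ∀ n : ℕ, ∑ i ∈ Finset.range n, (u i - u (i + 1)) = u 0 - u n :=
      fun n => Finset.sum_range_sub' u n
    simp only [h1]
    exact Tendsto.const_sub _ hlim
  rw [← ENNReal.ofReal_tsum_of_nonneg hnn hhs.summable, hhs.tsum_eq]

section main

variable {a b : ℝ} {N : ℕ} {G : ℤ → ℝ}

lemma sumG (hG : ∀ n : ℤ, G n = if n < 0 then a else if n = 0 then (N : ℝ) else b)
    {l r : ℤ} (hl : l ≤ 0) (hr : 0 ≤ r) :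
    ∑ y ∈ Finset.Icc l r, G y = a * (-(l : ℝ)) + N + b * (r : ℝ) := by
  have hsplit : Finset.Icc l r =
      (Finset.Ioc (l - 1) (-1) ∪ Finset.Ioc (-1) 0) ∪ Finset.Ioc 0 r := by
    ext y
    simp only [Finset.mem_Icc, Finset.mem_union, Finset.mem_Ioc]
    omega
  have hd1 : Disjoint (Finset.Ioc (l - 1) (-1)) (Finset.Ioc (-1 : ℤ) 0) := by
    rw [Finset.disjoint_left]
    intro y hy1 hy2
    simp only [Finset.mem_Ioc] at hy1 hy2
    omega
  have hd2 : Disjoint (Finset.Ioc (l - 1) (-1) ∪ Finset.Ioc (-1) 0) (Finset.Ioc (0 : ℤ) r) := by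
    rw [Finset.disjoint_left]
    intro y hy1 hy2
    simp only [Finset.mem_union, Finset.mem_Ioc] at hy1 hy2
    omega
  rw [hsplit, Finset.sum_union hd2, Finset.sum_union hd1]
  have e1 : ∑ y ∈ Finset.Ioc (l - 1) (-1), G y = a * (-(l : ℝ)) := by
    have hv : ∀ y ∈ Finset.Ioc (l - 1) (-1 : ℤ), G y = a := by
      intro y hy
      simp only [Finset.mem_Ioc] at hy
      rw [hG, if_pos (by omega)]
    rw [Finset.sum_congr rfl hv, Finset.sum_const, Int.card_Ioc, nsmul_eq_mul]
    have hc : (((-1 - (l - 1)).toNat : ℕ) : ℝ) = -(l : ℝ) := by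
      have := Int.toNat_of_nonneg (show (0:ℤ) ≤ -1 - (l - 1) by omega)
      have h2 : (((-1 - (l - 1)).toNat : ℤ) : ℝ) = ((-1 - (l - 1) : ℤ) : ℝ) := by
        exact_mod_cast congrArg (Int.cast : ℤ → ℝ) this
      push_cast at h2 ⊢
      linarith
    rw [hc, mul_comm]
  have e2 : ∑ y ∈ Finset.Ioc (-1 : ℤ) 0, G y = (N : ℝ) := by
    have : Finset.Ioc (-1 : ℤ) 0 = {0} := by
      ext y
      simp only [Finset.mem_Ioc, Finset.mem_singleton]
      omega
    rw [this, Finset.sum_singleton, hG]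
    norm_num
  have e3 : ∑ y ∈ Finset.Ioc (0 : ℤ) r, G y = b * (r : ℝ) := by
    have hv : ∀ y ∈ Finset.Ioc (0 : ℤ) r, G y = b := by
      intro y hy
      simp only [Finset.mem_Ioc] at hy
      rw [hG, if_neg (by omega), if_neg (by omega)]
    rw [Finset.sum_congr rfl hv, Finset.sum_const, Int.card_Ioc, nsmul_eq_mul]
    have hc : (((r - 0).toNat : ℕ) : ℝ) = (r : ℝ) := by
      have := Int.toNat_of_nonneg (show (0:ℤ) ≤ r - 0 by omega)
      have h2 : (((r - 0).toNat : ℤ) : ℝ) = ((r - 0 : ℤ) : ℝ) := by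
        exact_mod_cast congrArg (Int.cast : ℤ → ℝ) this
      push_cast at h2 ⊢
      linarith
    rw [hc, mul_comm]
  rw [e1, e2, e3]

lemma G_nonneg (ha : 0 ≤ a) (hb : 0 ≤ b)
    (hG : ∀ n : ℤ, G n = if n < 0 then a else if n = 0 then (N : ℝ) else b) (y : ℤ) :
    0 ≤ G y := by
  rw [hG]
  split_ifs
  · exact ha
  · exact Nat.cast_nonneg N
  · exact hb

lemma sum_abs_G (ha : 0 ≤ a) (hb : 0 ≤ b)
    (hG : ∀ n : ℤ, G n = if n < 0 then a else if n = 0 then (N : ℝ) else b) (s : Finset ℤ) :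
    ∑ y ∈ s, |G y| = ∑ y ∈ s, G y :=
  Finset.sum_congr rfl fun y _ => abs_of_nonneg (G_nonneg ha hb hG y)

lemma avg_le (ha : 0 ≤ a) (hb : 0 ≤ b) (hN : max a b ≤ N)
    (hG : ∀ n : ℤ, G n = if n < 0 then a else if n = 0 then (N : ℝ) else b)
    {n : ℤ} (hn : 0 ≤ n) (p : ℕ × ℕ) :
    (1 / ((p.1 : ℝ) + (p.2 : ℝ) + 1)) *
      ∑ y ∈ Finset.Icc (n - (p.1 : ℤ)) (n + (p.2 : ℤ)), |G y| ≤
      max a (((N : ℝ) + b * (n : ℝ)) / ((n : ℝ) + 1)) := by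
  set M := max a (((N : ℝ) + b * (n : ℝ)) / ((n : ℝ) + 1)) with hM
  have hn0 : (0 : ℝ) ≤ (n : ℝ) := by exact_mod_cast hn
  have hn1 : (0 : ℝ) < (n : ℝ) + 1 := by linarith
  have hb' : b ≤ (N : ℝ) := le_trans (le_max_right a b) hN
  have hMa : a ≤ M := le_max_left _ _
  have hMb : b ≤ M := by
    refine le_trans ?_ (le_max_right a _)
    rw [le_div_iff₀ hn1]
    nlinarith
  have hMN : (N : ℝ) + b * (n : ℝ) ≤ M * ((n : ℝ) + 1) :=
    (div_le_iff₀ hn1).1 (le_max_right a _)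
  set l : ℤ := n - (p.1 : ℤ) with hldef
  set r : ℤ := n + (p.2 : ℤ) with hrdef
  have hlr : l ≤ r := by omega
  have hcpos : (0 : ℝ) < (p.1 : ℝ) + (p.2 : ℝ) + 1 := by positivity
  have hcval : (p.1 : ℝ) + (p.2 : ℝ) + 1 = (r : ℝ) - (l : ℝ) + 1 := by
    rw [hldef, hrdef]
    push_cast
    ring
  rw [sum_abs_G ha hb hG, one_div_mul_eq_div, div_le_iff₀ hcpos]
  by_cases hl0 : l ≤ 0
  · have hr0 : 0 ≤ r := le_trans hn (by omega)
    rw [sumG hG hl0 hr0, hcval]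
    have hrn : (n : ℝ) ≤ (r : ℝ) := by
      have : n ≤ r := by omega
      exact_mod_cast this
    have hl0' : (l : ℝ) ≤ 0 := by exact_mod_cast hl0
    have h1 : a * (-(l : ℝ)) ≤ M * (-(l : ℝ)) :=
      mul_le_mul_of_nonneg_right hMa (by linarith)
    have h2 : b * ((r : ℝ) - (n : ℝ)) ≤ M * ((r : ℝ) - (n : ℝ)) :=
      mul_le_mul_of_nonneg_right hMb (by linarith)
    nlinarith
  · have hl1 : 1 ≤ l := by omega
    have hv : ∀ y ∈ Finset.Icc l r, G y ≤ M := by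
      intro y hy
      simp only [Finset.mem_Icc] at hy
      rw [hG, if_neg (by omega), if_neg (by omega)]
      exact hMb
    have hcard : ((Finset.Icc l r).card : ℝ) = (r : ℝ) - (l : ℝ) + 1 := by
      rw [Int.card_Icc]
      have : (((r + 1 - l).toNat : ℤ) : ℝ) = (r : ℝ) - (l : ℝ) + 1 := by
        rw [Int.toNat_of_nonneg (by omega)]
        push_cast
        ring
      exact_mod_cast this
    calc ∑ y ∈ Finset.Icc l r, G y ≤ (Finset.Icc l r).card • M :=
          Finset.sum_le_card_nsmul _ _ _ hv
      _ = ((Finset.Icc l r).card : ℝ) * M := nsmul_eq_mul _ _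
      _ = M * ((p.1 : ℝ) + (p.2 : ℝ) + 1) := by rw [hcard, hcval]; ring

lemma uHL_of_nonneg (ha : 0 ≤ a) (hb : 0 ≤ b) (hN : max a b ≤ N)
    (hG : ∀ n : ℤ, G n = if n < 0 then a else if n = 0 then (N : ℝ) else b)
    {n : ℤ} (hn : 0 ≤ n) :
    uHL G n = max a (((N : ℝ) + b * (n : ℝ)) / ((n : ℝ) + 1)) := by
  have key := avg_le ha hb hN hG hn
  have hn0 : (0 : ℝ) ≤ (n : ℝ) := by exact_mod_cast hn
  have hn1 : (0 : ℝ) < (n : ℝ) + 1 := by linarith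
  have hbdd : BddAbove (Set.range fun p : ℕ × ℕ =>
      (1 / ((p.1 : ℝ) + (p.2 : ℝ) + 1)) *
        ∑ y ∈ Finset.Icc (n - (p.1 : ℤ)) (n + (p.2 : ℤ)), |G y|) := by
    refine ⟨max a (((N : ℝ) + b * (n : ℝ)) / ((n : ℝ) + 1)), ?_⟩
    rintro _ ⟨p, rfl⟩
    exact key p
  set f : ℕ → ℝ := fun k => (a * (k : ℝ) + ((N : ℝ) + b * (n : ℝ))) / ((k : ℝ) + ((n : ℝ) + 1))
    with hf
  have hval : ∀ k : ℕ,
      (1 / (((n.toNat + k : ℕ) : ℝ) + ((0 : ℕ) : ℝ) + 1)) *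
        ∑ y ∈ Finset.Icc (n - ((n.toNat + k : ℕ) : ℤ)) (n + ((0 : ℕ) : ℤ)), |G y| = f k := by
    intro k
    have hl : n - ((n.toNat + k : ℕ) : ℤ) = -(k : ℤ) := by
      have := Int.toNat_of_nonneg hn
      push_cast
      omega
    have hrr : n + ((0 : ℕ) : ℤ) = n := by simp
    rw [hl, hrr, sum_abs_G ha hb hG, sumG hG (by omega) hn]
    have hden : ((n.toNat + k : ℕ) : ℝ) + ((0 : ℕ) : ℝ) + 1 = (k : ℝ) + ((n : ℝ) + 1) := by
      have := Int.toNat_of_nonneg hn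
      push_cast
      have : ((n.toNat : ℤ) : ℝ) = (n : ℝ) := by exact_mod_cast congrArg (Int.cast : ℤ → ℝ) this
      push_cast at this ⊢
      linarith
    rw [hden, hf]
    have hkn : (0 : ℝ) < (k : ℝ) + ((n : ℝ) + 1) := by positivity
    field_simp
    push_cast
    ring
  have hle : ∀ k : ℕ, f k ≤ uHL G n := by
    intro k
    rw [← hval k]
    exact le_ciSup hbdd ((n.toNat + k, 0) : ℕ × ℕ)
  refine le_antisymm (ciSup_le key) (max_le ?_ ?_)
  · -- a ≤ uHL G n, via the limit of f
    have hfa : Tendsto f atTop (nhds a) := by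
      have hfeq : f = fun k : ℕ =>
          a + ((N : ℝ) + b * (n : ℝ) - a * ((n : ℝ) + 1)) / ((k : ℝ) + ((n : ℝ) + 1)) := by
        funext k
        have hkn : (0 : ℝ) < (k : ℝ) + ((n : ℝ) + 1) := by positivity
        rw [hf]
        field_simp
        ring
      rw [hfeq]
      have hd : Tendsto (fun k : ℕ => (k : ℝ) + ((n : ℝ) + 1)) atTop atTop :=
        tendsto_atTop_add_const_right _ _ tendsto_natCast_atTop_atTop
      have h0 : Tendsto (fun k : ℕ =>
          ((N : ℝ) + b * (n : ℝ) - a * ((n : ℝ) + 1)) / ((k : ℝ) + ((n : ℝ) + 1)))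
          atTop (nhds 0) := Tendsto.div_atTop tendsto_const_nhds hd
      simpa using (tendsto_const_nhds (x := a)).add h0
    exact le_of_tendsto' hfa hle
  · -- the average over [0, n]
    have : ((N : ℝ) + b * (n : ℝ)) / ((n : ℝ) + 1) = f 0 := by
      rw [hf]
      norm_num
    rw [this]
    exact hle 0

end main

lemma uHL_reflect (G : ℤ → ℝ) (n : ℤ) : uHL G n = uHL (fun m => G (-m)) (-n) := by
  unfold uHL
  rw [← Function.Surjective.iSup_comp (f := Prod.swap)
    (fun p => ⟨p.swap, Prod.swap_swap p⟩)]
  refine iSup_congr fun p => ?_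
  have hsum : ∑ y ∈ Finset.Icc (-n - (p.1 : ℤ)) (-n + (p.2 : ℤ)), |G (-y)| =
      ∑ y ∈ Finset.Icc (n - (p.2 : ℤ)) (n + (p.1 : ℤ)), |G y| := by
    refine Finset.sum_nbij' (fun y => -y) (fun y => -y) ?_ ?_ ?_ ?_ ?_
    · intro y hy
      simp only [Finset.mem_Icc] at hy ⊢
      omega
    · intro y hy
      simp only [Finset.mem_Icc] at hy ⊢
      omega
    · intro y _; ring
    · intro y _; ring
    · intro y _; rfl
  simp only [Prod.snd_swap, Prod.fst_swap]
  rw [hsum]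
  ring

theorem stmt17 (a b : ℝ) (ha : 0 ≤ a) (hb : 0 ≤ b) (N : ℕ)
    (hN : max a b ≤ N) (G : ℤ → ℝ)
    (hG : ∀ n : ℤ, G n = if n < 0 then a else if n = 0 then (N : ℝ) else b) :
    varZ (uHL G) = varZ G - ENNReal.ofReal |b - a| := by
  have ha' : a ≤ (N : ℝ) := le_trans (le_max_left a b) hN
  have hb' : b ≤ (N : ℝ) := le_trans (le_max_right a b) hN
  -- closed form for uHL G
  set Mf : ℤ → ℝ := fun n =>
    if 0 ≤ n then max a (((N : ℝ) + b * (n : ℝ)) / ((n : ℝ) + 1))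
    else max b (((N : ℝ) + a * (-(n : ℝ))) / (-(n : ℝ) + 1)) with hMf
  have huHL : ∀ n : ℤ, uHL G n = Mf n := by
    intro n
    by_cases hn : 0 ≤ n
    · rw [uHL_of_nonneg ha hb hN hG hn, hMf]
      simp only [if_pos hn]
    · have hG' : ∀ m : ℤ, (fun m => G (-m)) m =
          if m < 0 then b else if m = 0 then (N : ℝ) else a := by
        intro m
        simp only
        rw [hG]
        rcases lt_trichotomy m 0 with h | h | h
        · rw [if_neg (by omega), if_neg (by omega), if_pos h]
        · subst h; norm_num
        · rw [if_pos (by omega), if_neg (by omega), if_neg (by omega)]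
      rw [uHL_reflect G n,
        uHL_of_nonneg hb ha (by rwa [max_comm]) hG' (by omega : (0:ℤ) ≤ -n), hMf]
      simp only [if_neg hn]
      push_cast
      ring_nf
  have hvar_eq : varZ (uHL G) = varZ Mf := by
    unfold varZ
    exact tsum_congr fun n => by rw [huHL, huHL]
  -- sequences on each side
  set u : ℕ → ℝ := fun k => max a (((N : ℝ) + b * (k : ℝ)) / ((k : ℝ) + 1)) with hu
  set v : ℕ → ℝ := fun k => max b (((N : ℝ) + a * (k : ℝ)) / ((k : ℝ) + 1)) with hv
  have hMfu : ∀ k : ℕ, Mf (k : ℤ) = u k := by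
    intro k
    rw [hMf]
    simp only [if_pos (Int.natCast_nonneg k)]
    push_cast
    rfl
  have hMfv : ∀ k : ℕ, Mf (-(k : ℤ)) = v k := by
    intro k
    rw [hMf]
    rcases Nat.eq_zero_or_pos k with hk | hk
    · subst hk
      simp only [Nat.cast_zero, neg_zero, le_refl, if_pos]
      simp only [hv]
      norm_num [max_eq_right ha', max_eq_right hb']
    · have : ¬ (0 : ℤ) ≤ -(k : ℤ) := by omega
      simp only [if_neg this, hv]
      push_cast
      norm_num
  -- antitone and limits
  have key_anti : ∀ c d : ℝ, d ≤ (N : ℝ) →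
      Antitone (fun k : ℕ => max c (((N : ℝ) + d * (k : ℝ)) / ((k : ℝ) + 1))) := by
    intro c d hd
    apply antitone_nat_of_succ_le
    intro k
    apply max_le_max le_rfl
    have h1 : (0 : ℝ) < (k : ℝ) + 1 := by positivity
    have h2 : (0 : ℝ) < ((k : ℝ) + 1) + 1 := by positivity
    rw [div_le_div_iff₀ (by push_cast; linarith) h1]
    push_cast
    nlinarith
  have key_lim : ∀ c d : ℝ, Tendsto
      (fun k : ℕ => max c (((N : ℝ) + d * (k : ℝ)) / ((k : ℝ) + 1))) atTop
      (nhds (max c d)) := by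
    intro c d
    have heq : (fun k : ℕ => ((N : ℝ) + d * (k : ℝ)) / ((k : ℝ) + 1)) =
        fun k : ℕ => d + ((N : ℝ) - d) * (1 / ((k : ℝ) + 1)) := by
      funext k
      have h1 : (0 : ℝ) < (k : ℝ) + 1 := by positivity
      field_simp
      ring
    have h2 : Tendsto (fun k : ℕ => ((N : ℝ) + d * (k : ℝ)) / ((k : ℝ) + 1)) atTop (nhds d) := by
      rw [heq]
      have := (tendsto_one_div_add_atTop_nhds_zero_nat).const_mul ((N : ℝ) - d)
      simpa using (tendsto_const_nhds (x := d)).add this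
    exact (tendsto_const_nhds (x := c)).max h2
  have hu0 : u 0 = (N : ℝ) := by
    rw [hu]
    norm_num [max_eq_right ha']
  have hv0 : v 0 = (N : ℝ) := by
    rw [hv]
    norm_num [max_eq_right hb']
  have huanti : Antitone u := key_anti a b hb'
  have hvanti : Antitone v := key_anti b a ha'
  have hulim : Tendsto u atTop (nhds (max a b)) := key_lim a b
  have hvlim : Tendsto v atTop (nhds (max b a)) := key_lim b a
  -- variation of Mf
  have hvarMf : varZ Mf =
      ENNReal.ofReal ((N : ℝ) - max a b) + ENNReal.ofReal ((N : ℝ) - max b a) := by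
    rw [varZ, tsum_of_nat_of_neg_add_one ENNReal.summable ENNReal.summable]
    have h1 : ∀ k : ℕ, ENNReal.ofReal |Mf ((k : ℤ) + 1) - Mf (k : ℤ)| =
        ENNReal.ofReal (u k - u (k + 1)) := by
      intro k
      have : ((k : ℤ) + 1) = ((k + 1 : ℕ) : ℤ) := by push_cast; ring
      rw [this, hMfu, hMfu, abs_of_nonpos (by linarith [huanti (Nat.le_succ k)]), neg_sub]
    have h2 : ∀ k : ℕ, ENNReal.ofReal |Mf (-((k : ℤ) + 1) + 1) - Mf (-((k : ℤ) + 1))| =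
        ENNReal.ofReal (v k - v (k + 1)) := by
      intro k
      have e1 : -((k : ℤ) + 1) + 1 = -(k : ℤ) := by ring
      have e2 : -((k : ℤ) + 1) = -((k + 1 : ℕ) : ℤ) := by push_cast; ring
      rw [e1, e2, hMfv, hMfv, abs_of_nonneg (by linarith [hvanti (Nat.le_succ k)])]
    simp only [h1, h2]
    rw [tele_tsum huanti hulim, tele_tsum hvanti hvlim, hu0, hv0]
  -- variation of G
  have hvarG : varZ G = ENNReal.ofReal ((N : ℝ) - a) + ENNReal.ofReal ((N : ℝ) - b) := by
    rw [varZ]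
    rw [tsum_eq_sum (s := ({-1, 0} : Finset ℤ)) ?_]
    · rw [Finset.sum_insert (by norm_num), Finset.sum_singleton]
      have e1 : G (-1 + 1) - G (-1) = (N : ℝ) - a := by
        rw [hG, hG]; norm_num
      have e2 : G (0 + 1) - G 0 = b - (N : ℝ) := by
        rw [hG, hG]; norm_num
      rw [e1, e2, abs_of_nonneg (by linarith), abs_of_nonpos (by linarith), neg_sub]
    · intro n hn
      simp only [Finset.mem_insert, Finset.mem_singleton] at hn
      push_neg at hn
      have : G (n + 1) = G n := by
        rw [hG, hG]
        split_ifs <;> first | rfl | omega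
      simp [this]
  rw [hvar_eq, hvarMf, hvarG]
  rw [← ENNReal.ofReal_add (by linarith) (by rw [max_comm b a]; linarith),
    ← ENNReal.ofReal_add (by linarith) (by linarith),
    ← ENNReal.ofReal_sub _ (abs_nonneg _)]
  congr 1
  rcases le_total a b with h | h
  · rw [max_eq_right h, max_eq_left h, abs_of_nonneg (by linarith)]
    ring
  · rw [max_eq_left h, max_eq_right h, abs_of_nonpos (by linarith)]
    ring
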